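/- Let Ω ⊆ ℂ be open and γ_n : Ω → ℂ² a sequence of holomorphic maps converging uniformly on compact subsets of Ω to γ. Suppose {K_n} is an exhaustion of Ω by compact sets with K_n ⊆ interior(K_{n+1}), and suppose there exists a sequence R_n → ∞ such that for every n and every z ∈ K_n \ K_{n-1}, |γ_m(z)| ≥ R_{n-3} for all m ≥ n. Then γ is a proper map from Ω to ℂ². -/

import Mathlib

open Filter

/-- Let `Ω ⊆ ℂ` be open and `γ n : Ω → ℂ²` holomorphic maps converging locally uniformly
on `Ω` to `γ`, let `{K n}` be a compact exhaustion of `Ω` with `K n ⊆ interior (K (n+1))`,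
and suppose `R n → ∞` is such that for all `z ∈ K n \ K (n-1)` and all `m ≥ n`,
`‖γ m z‖ ≥ R (n-3)`. Then `γ` is a proper map of `Ω` into `ℂ²`: the preimage in `Ω` of
every compact subset of `ℂ²` is compact. -/
theorem proper_limit_map (Ω : Set ℂ) (hΩ : IsOpen Ω)
    (γn : ℕ → ℂ → ℂ × ℂ) (γ : ℂ → ℂ × ℂ)
    (hhol : ∀ n, DifferentiableOn ℂ (γn n) Ω)
    (hconv : TendstoLocallyUniformlyOn γn γ atTop Ω)
    (K : ℕ → Set ℂ) (hKcompact : ∀ n, IsCompact (K n))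
    (hKmono : ∀ n, K n ⊆ interior (K (n + 1)))
    (hKunion : (⋃ n, K n) = Ω)
    (R : ℕ → ℝ) (hR : Tendsto R atTop atTop)
    (hlarge : ∀ n : ℕ, ∀ z ∈ K n \ K (n - 1), ∀ m, n ≤ m → R (n - 3) ≤ ‖γn m z‖) :
    ∀ L : Set (ℂ × ℂ), IsCompact L → IsCompact {z ∈ Ω | γ z ∈ L} := by
  intro L hL
  -- monotonicity of K
  have hKle : Monotone K := monotone_nat_of_le_succ fun n =>
    (hKmono n).trans interior_subset
  -- γ is continuous on Ω
  have hcont : ContinuousOn γ Ω :=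
    hconv.continuousOn (Frequently.of_forall fun n => (hhol n).continuousOn)
  -- bound on L
  obtain ⟨C, hC⟩ : ∃ C, ∀ w ∈ L, ‖w‖ ≤ C := by
    obtain ⟨C, hC⟩ := hL.isBounded.subset_closedBall 0
    exact ⟨C, fun w hw => by simpa using hC hw⟩
  -- choose N with R k > C for k ≥ N
  obtain ⟨N, hN⟩ := (hR.eventually_gt_atTop C).exists_forall_of_atTop
  set M := N + 3 with hM
  -- the set is contained in K M
  have hsub : {z ∈ Ω | γ z ∈ L} ⊆ K M := by
    classical
    rintro z ⟨hzΩ, hzL⟩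
    have hzU : ∃ n, z ∈ K n := by
      rw [← Set.mem_iUnion, hKunion]; exact hzΩ
    set n := Nat.find hzU with hn
    have hzn : z ∈ K n := Nat.find_spec hzU
    by_cases hnM : n ≤ M
    · exact hKle hnM hzn
    · exfalso
      push_neg at hnM
      have hn0 : 0 < n := lt_of_le_of_lt (Nat.zero_le M) hnM
      have hznot : z ∉ K (n - 1) := Nat.find_min hzU (Nat.sub_lt hn0 one_pos)
      have hlow : ∀ m, n ≤ m → R (n - 3) ≤ ‖γn m z‖ :=
        hlarge n z ⟨hzn, hznot⟩
      have hRa : C < R (n - 3) := hN (n - 3) (by omega)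
      have htend : Tendsto (fun m => ‖γn m z‖) atTop (nhds ‖γ z‖) :=
        (hconv.tendsto_at hzΩ).norm
      have : R (n - 3) ≤ ‖γ z‖ :=
        ge_of_tendsto htend (eventually_atTop.2 ⟨n, hlow⟩)
      exact absurd (hC _ hzL) (by linarith)
  -- hence compact
  have heq : {z ∈ Ω | γ z ∈ L} = K M ∩ γ ⁻¹' L := by
    apply Set.Subset.antisymm
    · intro z hz; exact ⟨hsub hz, hz.2⟩
    · rintro z ⟨hzK, hzL⟩
      have hzΩ : z ∈ Ω := by rw [← hKunion]; exact Set.mem_iUnion.2 ⟨M, hzK⟩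
      exact ⟨hzΩ, hzL⟩
  rw [heq]
  have hKΩ : K M ⊆ Ω := fun z hz => by
    rw [← hKunion]; exact Set.mem_iUnion.2 ⟨M, hz⟩
  exact (hKcompact M).of_isClosed_subset
    ((hcont.mono hKΩ).preimage_isClosed_of_isClosed (hKcompact M).isClosed hL.isClosed)
    Set.inter_subset_left
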